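/- Let B be a totally sign-skew-symmetric n×n integer matrix satisfying the Assumption. If for some finite sequence w of mutation indices and some index i the i-th column g of the G-matrix G_w has all entries ≥ 0, then g = e_j for some index j, where e_j denotes the j-th standard basis vector of ℤ^n. -/

import Mathlib

open Matrix

/-- Mutation of an integer matrix at index `k`. -/
def mutB {n : ℕ} (B : Matrix (Fin n) (Fin n) ℤ) (k : Fin n) : Matrix (Fin n) (Fin n) ℤ :=
  Matrix.of fun i j =>
    if i = k ∨ j = k then -B i j
    else B i j + (B i k).sign * max (B i k * B k j) 0

/-- Sign-skew-symmetric matrix. -/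
def SignSkew {n : ℕ} (B : Matrix (Fin n) (Fin n) ℤ) : Prop :=
  ∀ i j, B i j * B j i ≤ 0 ∧ (B i j * B j i = 0 → B i j = 0 ∧ B j i = 0)

/-- Entrywise positive part `[A]₊`. -/
def matPos {n : ℕ} (A : Matrix (Fin n) (Fin n) ℤ) : Matrix (Fin n) (Fin n) ℤ :=
  Matrix.of fun i j => max (A i j) 0

/-- `A^{k·}`: agrees with `A` in row `k`, zero elsewhere. -/
def rowSel {n : ℕ} (A : Matrix (Fin n) (Fin n) ℤ) (k : Fin n) : Matrix (Fin n) (Fin n) ℤ :=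
  Matrix.of fun i j => if i = k then A i j else 0

/-- `A^{·k}`: agrees with `A` in column `k`, zero elsewhere. -/
def colSel {n : ℕ} (A : Matrix (Fin n) (Fin n) ℤ) (k : Fin n) : Matrix (Fin n) (Fin n) ℤ :=
  Matrix.of fun i j => if j = k then A i j else 0

/-- `J_k`: identity matrix with the `(k,k)` entry replaced by `-1`. -/
def Jmat (n : ℕ) (k : Fin n) : Matrix (Fin n) (Fin n) ℤ :=
  Matrix.of fun i j => if i = j then (if i = k then -1 else 1) else 0

/-- One mutation step on a triple `(B_w, C_w, G_w)`, with fixed initial matrix `B0`: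
`B_{w·k} = μ_k(B_w)`, `C_{w·k} = C_w (J_k + [B_w]₊^{k·}) + [-C_w]₊^{·k} B_w`,
`G_{w·k} = G_w (J_k + [-B_w]₊^{·k}) - B0 [-C_w]₊^{·k}`. -/
def BCGstep {n : ℕ} (B0 : Matrix (Fin n) (Fin n) ℤ)
    (s : Matrix (Fin n) (Fin n) ℤ × Matrix (Fin n) (Fin n) ℤ × Matrix (Fin n) (Fin n) ℤ)
    (k : Fin n) :
    Matrix (Fin n) (Fin n) ℤ × Matrix (Fin n) (Fin n) ℤ × Matrix (Fin n) (Fin n) ℤ :=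
  (mutB s.1 k,
   s.2.1 * (Jmat n k + rowSel (matPos s.1) k) + colSel (matPos (-s.2.1)) k * s.1,
   s.2.2 * (Jmat n k + colSel (matPos (-s.1)) k) - B0 * colSel (matPos (-s.2.1)) k)

/-- The triple `(B_w, C_w, G_w)` associated to a mutation sequence `w`
(entries of `w` are applied from left to right). -/
def BCG {n : ℕ} (B : Matrix (Fin n) (Fin n) ℤ) (w : List (Fin n)) :
    Matrix (Fin n) (Fin n) ℤ × Matrix (Fin n) (Fin n) ℤ × Matrix (Fin n) (Fin n) ℤ :=
  w.foldl (BCGstep B) (B, 1, 1)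

/-- The exchange matrix `B_w` of `B` at the sequence `w`. -/
def Bmat {n : ℕ} (B : Matrix (Fin n) (Fin n) ℤ) (w : List (Fin n)) :
    Matrix (Fin n) (Fin n) ℤ := (BCG B w).1

/-- The `C`-matrix `C_w^B`. -/
def Cmat {n : ℕ} (B : Matrix (Fin n) (Fin n) ℤ) (w : List (Fin n)) :
    Matrix (Fin n) (Fin n) ℤ := (BCG B w).2.1

/-- The `G`-matrix `G_w^B`. -/
def Gmat {n : ℕ} (B : Matrix (Fin n) (Fin n) ℤ) (w : List (Fin n)) :
    Matrix (Fin n) (Fin n) ℤ := (BCG B w).2.2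

/-- Totally sign-skew-symmetric: every matrix obtained from `B` by a finite sequence of
mutations is sign-skew-symmetric. -/
def TotSSS {n : ℕ} (B : Matrix (Fin n) (Fin n) ℤ) : Prop :=
  ∀ w : List (Fin n), SignSkew (Bmat B w)

/-- The `j`-th column of `A` is sign-coherent with sign `ε`. -/
def ColHasSign {n : ℕ} (A : Matrix (Fin n) (Fin n) ℤ) (j : Fin n) (ε : ℤ) : Prop :=
  (∃ i, A i j ≠ 0) ∧ ((ε = 1 ∧ ∀ i, 0 ≤ A i j) ∨ (ε = -1 ∧ ∀ i, A i j ≤ 0))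

/-- The `j`-th column of `A` is sign-coherent. -/
def ColSignCoherent {n : ℕ} (A : Matrix (Fin n) (Fin n) ℤ) (j : Fin n) : Prop :=
  ∃ ε : ℤ, ColHasSign A j ε

/-- The `i`-th row of `A` is sign-coherent with sign `ε`. -/
def RowHasSign {n : ℕ} (A : Matrix (Fin n) (Fin n) ℤ) (i : Fin n) (ε : ℤ) : Prop :=
  (∃ j, A i j ≠ 0) ∧ ((ε = 1 ∧ ∀ j, 0 ≤ A i j) ∨ (ε = -1 ∧ ∀ j, A i j ≤ 0))

/-- The **Assumption**: for every matrix `B₀` obtained from `B` or `-B` by a finite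
sequence of mutations, every sequence `w` and every index `k`, the `k`-th columns of
`C_w^{B₀}` and `C_w^{-B₀ᵀ}` are both sign-coherent with the same sign. -/
def TheAssumption {n : ℕ} (B : Matrix (Fin n) (Fin n) ℤ) : Prop :=
  ∀ B0 : Matrix (Fin n) (Fin n) ℤ,
    ((∃ v : List (Fin n), B0 = Bmat B v) ∨ (∃ v : List (Fin n), B0 = Bmat (-B) v)) →
    ∀ (w : List (Fin n)) (k : Fin n),
      ∃ ε : ℤ, ColHasSign (Cmat B0 w) k ε ∧ ColHasSign (Cmat (-B0ᵀ) w) k ε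


section
variable {n : ℕ} (A X B : Matrix (Fin n) (Fin n) ℤ) (k : Fin n)

lemma mul_rowSel_apply (i j : Fin n) : (X * rowSel A k) i j = X i k * A k j := by
  simp [Matrix.mul_apply, rowSel, ite_and]

lemma colSel_mul_apply (i j : Fin n) : (colSel A k * X) i j = A i k * X k j := by
  simp [Matrix.mul_apply, colSel]

lemma mul_colSel : X * colSel A k = colSel (X * A) k := by
  ext i j
  by_cases h : j = k <;>
  simp [Matrix.mul_apply, colSel, h, Finset.sum_ite_eq]

lemma rowSel_mul : rowSel A k * X = rowSel (A * X) k := by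
  ext i j
  by_cases h : i = k <;>
  simp [Matrix.mul_apply, rowSel, h]

lemma Jmat_mul_apply (i j : Fin n) : (Jmat n k * X) i j = if i = k then -X i j else X i j := by
  simp [Matrix.mul_apply, Jmat, ite_and]

lemma mul_Jmat_apply (i j : Fin n) : (X * Jmat n k) i j = if j = k then -X i j else X i j := by
  simp [Matrix.mul_apply, Jmat, ite_and]

lemma Jmat_transpose : (Jmat n k)ᵀ = Jmat n k := by
  ext i j; simp only [Jmat, Matrix.transpose_apply, Matrix.of_apply, eq_comm]
  by_cases h : i = j <;> simp_all [eq_comm]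

lemma colSel_transpose : (colSel A k)ᵀ = rowSel Aᵀ k := by
  ext i j; simp [colSel, rowSel]

lemma matPos_transpose : (matPos A)ᵀ = matPos Aᵀ := by
  ext i j; simp [matPos]

lemma matPos_neg_transpose : matPos (-Aᵀ) = (matPos (-A))ᵀ := by
  ext i j; simp [matPos]

lemma colSel_add (A' : Matrix (Fin n) (Fin n) ℤ) : colSel (A + A') k = colSel A k + colSel A' k := by
  ext i j; by_cases h : j = k <;> simp [colSel, h]

lemma rowSel_add (A' : Matrix (Fin n) (Fin n) ℤ) : rowSel (A + A') k = rowSel A k + rowSel A' k := by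
  ext i j; by_cases h : i = k <;> simp [rowSel, h]

lemma Jmat_sq : Jmat n k * Jmat n k = 1 := by
  ext i j
  rw [Jmat_mul_apply]
  by_cases h : i = j <;> by_cases h2 : i = k <;>
    simp_all [Jmat, Matrix.one_apply, eq_comm]

lemma Jmat_sq_row (hA : A k k = 0) :
    (Jmat n k + rowSel A k) * (Jmat n k + rowSel A k) = 1 := by
  have h1 : Jmat n k * rowSel A k = -(rowSel A k) := by
    ext i j; rw [Jmat_mul_apply]
    by_cases h : i = k <;> simp [rowSel, h]
  have h2 : rowSel A k * Jmat n k = rowSel A k := by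
    ext i j; rw [mul_Jmat_apply]
    by_cases h : j = k <;> by_cases h' : i = k <;> simp [rowSel, h, h', hA]
  have h3 : rowSel A k * rowSel A k = 0 := by
    ext i j; rw [rowSel_mul]
    by_cases h : i = k
    · simp only [rowSel, Matrix.of_apply, if_pos h, Matrix.zero_apply, h]
      rw [if_pos trivial, show (of fun i j => if i = k then A i j else 0) = rowSel A k from rfl,
        mul_rowSel_apply]; simp [hA]
    · simp [rowSel, h]
  rw [add_mul, mul_add, mul_add, Jmat_sq, h1, h2, h3]
  abel

end
lemma key1 (b c : ℤ) : b.sign * max (b*c) 0 - max (-b) 0 * c = b * max c 0 := by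
  rcases lt_trichotomy b 0 with hb|hb|hb <;> rcases le_total c 0 with hc|hc
  · rw [Int.sign_eq_neg_one_of_neg hb, max_eq_left (by nlinarith : (0:ℤ) ≤ b*c),
      max_eq_left (neg_nonneg.2 hb.le), max_eq_right hc]; ring
  · rw [Int.sign_eq_neg_one_of_neg hb, max_eq_right (mul_nonpos_of_nonpos_of_nonneg hb.le hc),
      max_eq_left (neg_nonneg.2 hb.le), max_eq_left hc]; ring
  · simp [hb]
  · simp [hb]
  · rw [Int.sign_eq_one_of_pos hb, max_eq_right (mul_nonpos_of_nonneg_of_nonpos hb.le hc),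
      max_eq_right (neg_nonpos.2 hb.le), max_eq_right hc]; ring
  · rw [Int.sign_eq_one_of_pos hb, max_eq_left (mul_nonneg hb.le hc),
      max_eq_right (neg_nonpos.2 hb.le), max_eq_left hc]; ring

lemma key2 (b c : ℤ) : b.sign * max (b*c) 0 - max b 0 * c = b * max (-c) 0 := by
  have := key1 b (-c)
  rw [show b * -c = -(b*c) by ring] at this
  have h2 := key1 (-b) c
  rw [show -b*c = -(b*c) by ring, neg_neg, Int.sign_neg] at h2
  linarith [key1 b c, key1 (-b) c]

lemma key3 (p q : ℤ) : p.sign * max (p*q) 0 = q.sign * max (q*p) 0 := by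
  rcases lt_trichotomy p 0 with hp|hp|hp <;> rcases lt_trichotomy q 0 with hq|hq|hq <;>
    try simp [hp, hq]
  · rw [Int.sign_eq_neg_one_of_neg hp, Int.sign_eq_neg_one_of_neg hq, mul_comm p q]
  · rw [Int.sign_eq_neg_one_of_neg hp, Int.sign_eq_one_of_pos hq,
      max_eq_right (mul_nonpos_of_nonpos_of_nonneg hp.le hq.le),
      max_eq_right (mul_nonpos_of_nonneg_of_nonpos hq.le hp.le)]; ring
  · rw [Int.sign_eq_one_of_pos hp, Int.sign_eq_neg_one_of_neg hq,
      max_eq_right (mul_nonpos_of_nonneg_of_nonpos hp.le hq.le),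
      max_eq_right (mul_nonpos_of_nonpos_of_nonneg hq.le hp.le)]; ring
  · rw [Int.sign_eq_one_of_pos hp, Int.sign_eq_one_of_pos hq, mul_comm p q]

section
variable {n : ℕ} (B : Matrix (Fin n) (Fin n) ℤ) (k : Fin n)

lemma diag_zero (h : SignSkew B) : B k k = 0 := by
  have h1 := (h k k).1
  nlinarith

lemma mutB_neg_transpose : mutB (-Bᵀ) k = -(mutB B k)ᵀ := by
  ext i j
  simp only [mutB, Matrix.of_apply, Matrix.neg_apply, Matrix.transpose_apply]
  by_cases h1 : i = k
  · simp [h1]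
  · by_cases h2 : j = k
    · simp [h2, h1]
    · rw [if_neg (by tauto), if_neg (by tauto)]
      have h4 := key3 (-(B k i)) (-(B j k))
      rw [show -B k i * -B j k = B k i * B j k by ring,
        show -B j k * -B k i = B j k * B k i by ring, Int.sign_neg, Int.sign_neg] at h4
      rw [show -B k i * -B j k = B k i * B j k by ring, Int.sign_neg]
      linarith [h4]

lemma lemP1 (hkk : B k k = 0) :
    (Jmat n k + colSel (matPos (-B)) k) * mutB B k
      = B * (Jmat n k + rowSel (matPos B) k) := by
  ext i j
  rw [add_mul, mul_add]
  simp only [Matrix.add_apply]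
  rw [Jmat_mul_apply, colSel_mul_apply, mul_Jmat_apply, mul_rowSel_apply]
  by_cases h1 : i = k
  · by_cases h2 : j = k <;> simp [mutB, matPos, h1, h2, hkk]
  · by_cases h2 : j = k
    · simp [mutB, matPos, h1, h2, hkk]
    · have e1 : mutB B k k j = -(B k j) := by simp [mutB]
      have e2 : mutB B k i j = B i j + (B i k).sign * max (B i k * B k j) 0 := by
        simp [mutB, h1, h2]
      rw [if_neg h1, if_neg h2, e1, e2]
      simp only [matPos, Matrix.of_apply, Matrix.neg_apply]
      linear_combination key1 (B i k) (B k j)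

lemma lemP2 (hkk : B k k = 0) :
    (Jmat n k + colSel (matPos B) k) * mutB B k
      = B * (Jmat n k + rowSel (matPos (-B)) k) := by
  ext i j
  rw [add_mul, mul_add]
  simp only [Matrix.add_apply]
  rw [Jmat_mul_apply, colSel_mul_apply, mul_Jmat_apply, mul_rowSel_apply]
  by_cases h1 : i = k
  · by_cases h2 : j = k <;> simp [mutB, matPos, h1, h2, hkk]
  · by_cases h2 : j = k
    · simp [mutB, matPos, h1, h2, hkk]
    · have e1 : mutB B k k j = -(B k j) := by simp [mutB]
      have e2 : mutB B k i j = B i j + (B i k).sign * max (B i k * B k j) 0 := by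
        simp [mutB, h1, h2]
      rw [if_neg h1, if_neg h2, e1, e2]
      simp only [matPos, Matrix.of_apply, Matrix.neg_apply]
      linear_combination key2 (B i k) (B k j)

lemma BCG_snoc (w : List (Fin n)) : BCG B (w ++ [k]) = BCGstep B (BCG B w) k := by
  simp [BCG]

lemma Bmat_snoc (w : List (Fin n)) : Bmat B (w ++ [k]) = mutB (Bmat B w) k := by
  simp [Bmat, Cmat, Gmat, BCG_snoc, BCGstep]

lemma Cmat_snoc (w : List (Fin n)) :
    Cmat B (w ++ [k]) = Cmat B w * (Jmat n k + rowSel (matPos (Bmat B w)) k)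
      + colSel (matPos (-(Cmat B w))) k * Bmat B w := by
  simp [Bmat, Cmat, BCG_snoc, BCGstep]

lemma Gmat_snoc (w : List (Fin n)) :
    Gmat B (w ++ [k]) = Gmat B w * (Jmat n k + colSel (matPos (-(Bmat B w))) k)
      - B * colSel (matPos (-(Cmat B w))) k := by
  simp [Bmat, Cmat, Gmat, BCG_snoc, BCGstep]

lemma Bmat_neg_transpose (w : List (Fin n)) : Bmat (-Bᵀ) w = -(Bmat B w)ᵀ := by
  induction w using List.reverseRecOn with
  | nil => rfl
  | append_singleton w k ih => rw [Bmat_snoc, Bmat_snoc, ih, mutB_neg_transpose]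

end
section
variable {n : ℕ} (A X B : Matrix (Fin n) (Fin n) ℤ) (k : Fin n)

lemma colSel_mul_eq : colSel A k * X = A * rowSel X k := by
  ext i j; rw [colSel_mul_apply, mul_rowSel_apply]

lemma rowSel_matPos_sub : rowSel (matPos A) k - rowSel A k = rowSel (matPos (-A)) k := by
  ext i j
  by_cases h : i = k <;> simp [rowSel, matPos, h]
  rcases le_total (A k j) 0 with hc | hc
  · rw [max_eq_right hc, max_eq_left (by linarith)]; ring
  · rw [max_eq_left hc, max_eq_right (by linarith)]; ring

lemma rowSel_matPos_add : rowSel (matPos (-A)) k + rowSel A k = rowSel (matPos A) k := by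
  rw [← rowSel_matPos_sub]; abel

lemma colSel_matPos_add : colSel (matPos (-A)) k + colSel A k = colSel (matPos A) k := by
  ext i j
  by_cases h : j = k <;> simp [colSel, matPos, h]
  rcases le_total (A i k) 0 with hc | hc
  · rw [max_eq_right hc, max_eq_left (by linarith)]; ring
  · rw [max_eq_left hc, max_eq_right (by linarith)]; ring

lemma master (hB : TotSSS B) (hA : TheAssumption B) (w : List (Fin n)) :
    B * Cmat B w = Gmat B w * Bmat B w ∧ (Gmat B w)ᵀ * Cmat (-Bᵀ) w = 1 := by
  induction w using List.reverseRecOn with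
  | nil =>
      refine ⟨?_, ?_⟩
      · show B * 1 = 1 * B; rw [mul_one, one_mul]
      · show (1 : Matrix (Fin n) (Fin n) ℤ)ᵀ * 1 = 1; simp
  | append_singleton w k ih =>
      obtain ⟨ih1, ih2⟩ := ih
      obtain ⟨ε, ⟨_, hC⟩, ⟨_, hC'⟩⟩ := hA B (Or.inl ⟨[], rfl⟩) w k
      have hss : SignSkew (Bmat B w) := hB w
      have hkk : Bmat B w k k = 0 := diag_zero _ k hss
      set Bw := Bmat B w with hBw
      set Cw := Cmat B w with hCw
      set Gw := Gmat B w with hGw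
      set Cw' := Cmat (-Bᵀ) w with hCw'
      have hBT : Bmat (-Bᵀ) w = -Bwᵀ := Bmat_neg_transpose B w
      rw [Cmat_snoc, Gmat_snoc, Bmat_snoc, Cmat_snoc, hBT, ← hBw, ← hCw, ← hGw, ← hCw']
      rcases hC with ⟨hε, hpos⟩ | ⟨hε, hneg⟩
      · -- ε = 1 : both columns nonnegative
        subst hε
        rcases hC' with ⟨_, hpos'⟩ | ⟨habs, _⟩
        swap
        · exact absurd habs (by norm_num)
        have hz : colSel (matPos (-Cw)) k = 0 := by
          ext i j
          by_cases h : j = k <;> simp [colSel, matPos, h]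
          exact hpos i
        have hz' : colSel (matPos (-Cw')) k = 0 := by
          ext i j
          by_cases h : j = k <;> simp [colSel, matPos, h]
          exact hpos' i
        rw [hz, hz']
        have hE : rowSel (matPos (-Bwᵀ)) k = (colSel (matPos (-Bw)) k)ᵀ := by
          rw [matPos_neg_transpose, colSel_transpose, matPos_transpose]
        refine ⟨?_, ?_⟩
        · rw [zero_mul, add_zero, mul_zero, sub_zero, ← mul_assoc, ih1, mul_assoc,
            ← lemP1 Bw k hkk, ← mul_assoc]
        · rw [zero_mul, add_zero, mul_zero, sub_zero, hE, Matrix.transpose_mul,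
            Matrix.transpose_add, Jmat_transpose]
          calc (Jmat n k + (colSel (matPos (-Bw)) k)ᵀ) * Gwᵀ *
                (Cw' * (Jmat n k + (colSel (matPos (-Bw)) k)ᵀ))
              = (Jmat n k + (colSel (matPos (-Bw)) k)ᵀ) * (Gwᵀ * Cw') *
                (Jmat n k + (colSel (matPos (-Bw)) k)ᵀ) := by
                rw [mul_assoc, mul_assoc, mul_assoc]
            _ = (Jmat n k + (colSel (matPos (-Bw)) k)ᵀ) *
                (Jmat n k + (colSel (matPos (-Bw)) k)ᵀ) := by rw [ih2, mul_one]
            _ = 1 := by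
                rw [colSel_transpose]
                exact Jmat_sq_row _ k (by simp [matPos, hkk])
      · -- ε = -1 : both columns nonpositive
        subst hε
        rcases hC' with ⟨habs, _⟩ | ⟨_, hneg'⟩
        · exact absurd habs (by norm_num)
        have hz : colSel (matPos (-Cw)) k = -(colSel Cw k) := by
          ext i j
          by_cases h : j = k <;> simp [colSel, matPos, h]
          exact hneg i
        have hz' : colSel (matPos (-Cw')) k = -(colSel Cw' k) := by
          ext i j
          by_cases h : j = k <;> simp [colSel, matPos, h]
          exact hneg' i
        rw [hz, hz']
        have hCnew : Cw * (Jmat n k + rowSel (matPos Bw) k) + -(colSel Cw k) * Bw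
            = Cw * (Jmat n k + rowSel (matPos (-Bw)) k) := by
          rw [neg_mul, colSel_mul_eq, ← rowSel_matPos_sub]
          noncomm_ring
        have hCnew' : Cw' * (Jmat n k + rowSel (matPos (-Bwᵀ)) k) + -(colSel Cw' k) * (-Bwᵀ)
            = Cw' * (Jmat n k + (colSel (matPos Bw) k)ᵀ) := by
          rw [show (colSel (matPos Bw) k)ᵀ = rowSel (matPos Bwᵀ) k from by
              rw [colSel_transpose, matPos_transpose]]
          rw [neg_mul_neg, colSel_mul_eq]
          rw [← rowSel_matPos_add (Bwᵀ) k]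
          noncomm_ring
        have hGnew : Gw * (Jmat n k + colSel (matPos (-Bw)) k) - B * -(colSel Cw k)
            = Gw * (Jmat n k + colSel (matPos Bw) k) := by
          rw [mul_neg, sub_neg_eq_add, mul_colSel, ih1, ← mul_colSel,
            show Jmat n k + colSel (matPos Bw) k
                = Jmat n k + (colSel (matPos (-Bw)) k + colSel Bw k) from by
              rw [colSel_matPos_add],
            mul_add, mul_add, mul_add]
          abel
        rw [hCnew, hCnew', hGnew]
        refine ⟨?_, ?_⟩
        · rw [← mul_assoc, ih1, mul_assoc, ← lemP2 Bw k hkk, ← mul_assoc]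
        · rw [Matrix.transpose_mul, Matrix.transpose_add, Jmat_transpose]
          calc (Jmat n k + (colSel (matPos Bw) k)ᵀ) * Gwᵀ *
                (Cw' * (Jmat n k + (colSel (matPos Bw) k)ᵀ))
              = (Jmat n k + (colSel (matPos Bw) k)ᵀ) * (Gwᵀ * Cw') *
                (Jmat n k + (colSel (matPos Bw) k)ᵀ) := by
                rw [mul_assoc, mul_assoc, mul_assoc]
            _ = (Jmat n k + (colSel (matPos Bw) k)ᵀ) *
                (Jmat n k + (colSel (matPos Bw) k)ᵀ) := by rw [ih2, mul_one]
            _ = 1 := by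
                rw [colSel_transpose]
                exact Jmat_sq_row _ k (by simp [matPos, hkk])

end

/-- under the Assumption, a `g`-vector (column of a `G`-matrix) with
all entries nonnegative is a standard basis vector. -/
theorem nonneg_g_vector_is_std {n : ℕ} (B : Matrix (Fin n) (Fin n) ℤ) (hB : TotSSS B)
    (hA : TheAssumption B) (w : List (Fin n)) (i : Fin n)
    (h : ∀ l, 0 ≤ Gmat B w l i) :
    ∃ j, ∀ l, Gmat B w l i = if l = j then 1 else 0 := by
  set G := Gmat B w with hG
  set C := Cmat (-Bᵀ) w with hC
  have hCG : Cᵀ * G = 1 := by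
    have h2 := (master B hB hA w).2
    have h3 := congrArg Matrix.transpose h2
    rwa [Matrix.transpose_mul, Matrix.transpose_transpose, Matrix.transpose_one] at h3
  have hGC : G * Cᵀ = 1 := mul_eq_one_comm.mp hCG
  -- sums
  have hsum : ∀ j, (∑ m, C m j * G m i) = if j = i then 1 else 0 := by
    intro j
    have := congrFun (congrFun hCG j) i
    simpa [Matrix.mul_apply, Matrix.one_apply] using this
  have key : ∀ l, G l i ≠ 0 → ∀ j, j ≠ i → C l j = 0 := by
    intro l hl j hj
    have hs : (∑ m, C m j * G m i) = 0 := by rw [hsum j, if_neg hj]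
    obtain ⟨ε, _, _, hsC⟩ := hA B (Or.inl ⟨[], rfl⟩) w j
    rcases hsC with ⟨_, hpos⟩ | ⟨_, hneg⟩
    · have := (Finset.sum_eq_zero_iff_of_nonneg (fun m _ => by
        exact mul_nonneg (hpos m) (h m))).mp hs l (Finset.mem_univ l)
      rcases mul_eq_zero.mp this with h1 | h1
      · exact h1
      · exact absurd h1 hl
    · have := (Finset.sum_eq_zero_iff_of_nonpos (fun m _ => by
        exact mul_nonpos_of_nonpos_of_nonneg (hneg m) (h m))).mp hs l (Finset.mem_univ l)
      rcases mul_eq_zero.mp this with h1 | h1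
      · exact h1
      · exact absurd h1 hl
  have hex : ∃ l, G l i ≠ 0 := by
    by_contra hc
    push_neg at hc
    have := hsum i
    rw [if_pos rfl] at this
    simp [hc] at this
  obtain ⟨l0, hl0⟩ := hex
  have hrow : ∀ l, G l i ≠ 0 → (∑ p, G l0 p * C l p) = G l0 i * C l i := by
    intro l hl
    rw [Finset.sum_eq_single i]
    · intro p _ hp
      rw [key l hl p hp, mul_zero]
    · intro hmem; exact absurd (Finset.mem_univ i) hmem
  have hGCapp : ∀ l m, (∑ p, G l p * C m p) = if l = m then 1 else 0 := by
    intro l m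
    have := congrFun (congrFun hGC l) m
    simpa [Matrix.mul_apply, Matrix.one_apply] using this
  have hd0 : G l0 i * C l0 i = 1 := by
    have := hGCapp l0 l0
    rw [if_pos rfl] at this
    rw [← this, hrow l0 hl0]
  have huniq : ∀ l, l ≠ l0 → G l i = 0 := by
    intro l hl
    by_contra hlne
    have h1 : G l0 i * C l i = 0 := by
      have := hGCapp l0 l
      rw [if_neg (fun hh => hl hh.symm)] at this
      rw [← this]
      rw [Finset.sum_eq_single i]
      · intro p _ hp; rw [key l hlne p hp, mul_zero]
      · intro hmem; exact absurd (Finset.mem_univ i) hmem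
    have h2 : G l i * C l i = 1 := by
      have := hGCapp l l
      rw [if_pos rfl] at this
      rw [← this]
      rw [Finset.sum_eq_single i]
      · intro p _ hp; rw [key l hlne p hp, mul_zero]
      · intro hmem; exact absurd (Finset.mem_univ i) hmem
    have hCl : C l i ≠ 0 := fun hz => by rw [hz, mul_zero] at h2; exact one_ne_zero h2.symm
    have hGl0 : G l0 i ≠ 0 := fun hz => by rw [hz, zero_mul] at hd0; exact one_ne_zero hd0.symm
    exact (mul_ne_zero hGl0 hCl) h1
  have hone : G l0 i = 1 := by
    have hu := Int.isUnit_iff.mp (IsUnit.of_mul_eq_one _ hd0)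
    rcases hu with h1 | h1
    · exact h1
    · exfalso; have := h l0; omega
  exact ⟨l0, fun l => by
    by_cases hl : l = l0
    · rw [if_pos hl, hl, hone]
    · rw [if_neg hl, huniq l hl]⟩
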